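/- Let H be a Hopf algebra over ℂ and φ: H → ℂ a right integral (i.e., Σ φ(x₁)x₂ = φ(x)1 for all x). Then ω(x, y) := φ(S(x)y) is a Fourier form on H. Conversely, if ω is a Fourier form on H, then x ↦ ω(1, x) is a right integral on H. -/

import Mathlib

open TensorProduct Coalgebra HopfAlgebra

variable {H : Type*} [Ring H] [HopfAlgebra ℂ H]

/-- `ω` is a Fourier form: `Σ ω(c, d₁) d₂ = Σ c₁ ω(c₂, d)` for all `c, d`. -/
def IsFourierForm (ω : H →ₗ[ℂ] H →ₗ[ℂ] ℂ) : Prop :=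
  ∀ c d : H,
    TensorProduct.lid ℂ H ((LinearMap.rTensor H (ω c)) (Coalgebra.comul (R := ℂ) d)) =
    TensorProduct.rid ℂ H ((LinearMap.lTensor H (ω.flip d)) (Coalgebra.comul (R := ℂ) c))

/-- `φ` is a right integral: `Σ φ(x₁) x₂ = φ(x) 1`. -/
def IsRightIntegral (φ : H →ₗ[ℂ] ℂ) : Prop :=
  ∀ x : H,
    TensorProduct.lid ℂ H ((LinearMap.rTensor H φ) (Coalgebra.comul (R := ℂ) x)) = φ x • 1

/-- The bilinear form `ω(x, y) = φ(S(x) y)` attached to a functional `φ`. -/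
noncomputable def intForm (φ : H →ₗ[ℂ] ℂ) : H →ₗ[ℂ] H →ₗ[ℂ] ℂ :=
  LinearMap.mk₂ ℂ (fun x y => φ (antipode (R := ℂ) x * y))
    (fun x x' y => by simp [map_add, add_mul])
    (fun a x y => by simp [map_smul, smul_mul_assoc])
    (fun x y y' => by simp [mul_add])
    (fun a x y => by simp [mul_smul_comm])


section ConvSection

variable {A : Type*} [Ring A] [Algebra ℂ A]

/-- Convolution product on linear maps from the coalgebra `H` to the algebra `A`. -/
noncomputable def conv (f g : H →ₗ[ℂ] A) : H →ₗ[ℂ] A :=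
  LinearMap.mul' ℂ A ∘ₗ TensorProduct.map f g ∘ₗ Coalgebra.comul

/-- The convolution unit. -/
noncomputable def cUnit : H →ₗ[ℂ] A :=
  Algebra.linearMap ℂ A ∘ₗ Coalgebra.counit

lemma conv_repr (f g : H →ₗ[ℂ] A) {x : H} {ι : Type*} (r : Coalgebra.Repr ℂ x ι) :
    conv f g x = ∑ i ∈ r.index, f (r.left i) * g (r.right i) := by
  simp only [conv, LinearMap.comp_apply, ← r.eq, map_sum, TensorProduct.map_tmul,
    LinearMap.mul'_apply]

lemma conv_assoc (f g h : H →ₗ[ℂ] A) : conv (conv f g) h = conv f (conv g h) := by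
  apply LinearMap.ext; intro x
  have r : Coalgebra.Repr ℂ x (H × H) := Coalgebra.Repr.arbitrary ℂ x
  have r₁ : ∀ i, Coalgebra.Repr ℂ (r.left i) (H × H) := fun i => Coalgebra.Repr.arbitrary ℂ _
  have r₂ : ∀ i, Coalgebra.Repr ℂ (r.right i) (H × H) := fun i => Coalgebra.Repr.arbitrary ℂ _
  have key := Coalgebra.sum_map_tmul_tmul_eq (R := ℂ) f g h x (repr := r) (a₁ := r₁) (a₂ := r₂)
  have key2 := congrArg (LinearMap.mul' ℂ A ∘ₗ LinearMap.lTensor A (LinearMap.mul' ℂ A)) key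
  simp only [map_sum, LinearMap.comp_apply, LinearMap.lTensor_tmul, LinearMap.mul'_apply] at key2
  rw [conv_repr (conv f g) h r, conv_repr f (conv g h) r]
  calc ∑ i ∈ r.index, conv f g (r.left i) * h (r.right i)
      = ∑ i ∈ r.index, ∑ j ∈ (r₁ i).index,
          f ((r₁ i).left j) * (g ((r₁ i).right j) * h (r.right i)) := by
        refine Finset.sum_congr rfl fun i _ => ?_
        rw [conv_repr f g (r₁ i), Finset.sum_mul]
        simp [mul_assoc]
    _ = ∑ i ∈ r.index, ∑ j ∈ (r₂ i).index,
          f (r.left i) * (g ((r₂ i).left j) * h ((r₂ i).right j)) := key2.symm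
    _ = ∑ i ∈ r.index, f (r.left i) * conv g h (r.right i) := by
        refine Finset.sum_congr rfl fun i _ => ?_
        rw [conv_repr g h (r₂ i), Finset.mul_sum]

lemma conv_cUnit (f : H →ₗ[ℂ] A) : conv f cUnit = f := by
  apply LinearMap.ext; intro x
  have r : Coalgebra.Repr ℂ x (H × H) := Coalgebra.Repr.arbitrary ℂ x
  have key := Coalgebra.sum_map_tmul_counit_eq (R := ℂ) f x (repr := r)
  have key2 := congrArg (TensorProduct.rid ℂ A) key
  simp only [map_sum, TensorProduct.rid_tmul, one_smul] at key2
  rw [conv_repr f cUnit r, ← key2]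
  refine Finset.sum_congr rfl fun i _ => ?_
  simp [cUnit, Algebra.smul_def, (Algebra.commutes _ _).symm]

lemma cUnit_conv (f : H →ₗ[ℂ] A) : conv cUnit f = f := by
  apply LinearMap.ext; intro x
  have r : Coalgebra.Repr ℂ x (H × H) := Coalgebra.Repr.arbitrary ℂ x
  have key := Coalgebra.sum_counit_tmul_map_eq (R := ℂ) f x (repr := r)
  have key2 := congrArg (TensorProduct.lid ℂ A) key
  simp only [map_sum, TensorProduct.lid_tmul, one_smul] at key2
  rw [conv_repr cUnit f r, ← key2]
  refine Finset.sum_congr rfl fun i _ => ?_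
  simp [cUnit, Algebra.smul_def]

lemma algHom_comp_conv {B : Type*} [Ring B] [Algebra ℂ B] (ψ : A →ₐ[ℂ] B)
    (f g : H →ₗ[ℂ] A) :
    ψ.toLinearMap ∘ₗ conv f g = conv (ψ.toLinearMap ∘ₗ f) (ψ.toLinearMap ∘ₗ g) := by
  apply LinearMap.ext; intro x
  have r : Coalgebra.Repr ℂ x (H × H) := Coalgebra.Repr.arbitrary ℂ x
  rw [LinearMap.comp_apply, conv_repr f g r, conv_repr _ _ r]
  simp [map_sum]

lemma algHom_comp_cUnit {B : Type*} [Ring B] [Algebra ℂ B] (ψ : A →ₐ[ℂ] B) :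
    ψ.toLinearMap ∘ₗ (cUnit : H →ₗ[ℂ] A) = cUnit := by
  apply LinearMap.ext; intro x
  simp [cUnit]

end ConvSection

lemma conv_antipode_id : conv (antipode (R := ℂ) : H →ₗ[ℂ] H) LinearMap.id = cUnit := by
  apply LinearMap.ext; intro x
  have r : Coalgebra.Repr ℂ x (H × H) := Coalgebra.Repr.arbitrary ℂ x
  rw [conv_repr _ _ r]
  simpa [cUnit] using HopfAlgebra.sum_antipode_mul_eq_algebraMap_counit (R := ℂ) r

lemma conv_id_antipode : conv LinearMap.id (antipode (R := ℂ) : H →ₗ[ℂ] H) = cUnit := by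
  apply LinearMap.ext; intro x
  have r : Coalgebra.Repr ℂ x (H × H) := Coalgebra.Repr.arbitrary ℂ x
  rw [conv_repr _ _ r]
  simpa [cUnit] using HopfAlgebra.sum_mul_antipode_eq_algebraMap_counit (R := ℂ) r

noncomputable abbrev ι₁ : H →ₗ[ℂ] H ⊗[ℂ] H :=
  (Algebra.TensorProduct.includeLeft : H →ₐ[ℂ] H ⊗[ℂ] H).toLinearMap

noncomputable abbrev ι₂ : H →ₗ[ℂ] H ⊗[ℂ] H :=
  (Algebra.TensorProduct.includeRight : H →ₐ[ℂ] H ⊗[ℂ] H).toLinearMap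

/-- `Δ ∘ S`. -/
noncomputable abbrev cS : H →ₗ[ℂ] H ⊗[ℂ] H :=
  Coalgebra.comul ∘ₗ (antipode (R := ℂ))

lemma comul_toLinearMap : (Bialgebra.comulAlgHom ℂ H).toLinearMap = (Coalgebra.comul : H →ₗ[ℂ] H ⊗[ℂ] H) := rfl

lemma conv_cS_comul : conv (cS (H := H)) Coalgebra.comul = cUnit := by
  have h := algHom_comp_conv (Bialgebra.comulAlgHom ℂ H) (antipode (R := ℂ)) LinearMap.id
  rw [conv_antipode_id, algHom_comp_cUnit] at h
  simpa [comul_toLinearMap] using h.symm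

lemma conv_comul_cS : conv Coalgebra.comul (cS (H := H)) = cUnit := by
  have h := algHom_comp_conv (Bialgebra.comulAlgHom ℂ H) LinearMap.id (antipode (R := ℂ))
  rw [conv_id_antipode, algHom_comp_cUnit] at h
  simpa [comul_toLinearMap] using h.symm

lemma conv_iS_i1 : conv ((ι₁ (H := H)) ∘ₗ antipode (R := ℂ)) ι₁ = cUnit := by
  have h := algHom_comp_conv (Algebra.TensorProduct.includeLeft : H →ₐ[ℂ] H ⊗[ℂ] H)
    (antipode (R := ℂ)) LinearMap.id
  rw [conv_antipode_id, algHom_comp_cUnit] at h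
  simpa using h.symm

lemma conv_i1_i2 : conv (ι₁ (H := H)) ι₂ = Coalgebra.comul := by
  apply LinearMap.ext; intro x
  have r : Coalgebra.Repr ℂ x (H × H) := Coalgebra.Repr.arbitrary ℂ x
  rw [conv_repr _ _ r, ← r.eq]
  refine Finset.sum_congr rfl fun i _ => ?_
  simp [Algebra.TensorProduct.tmul_mul_tmul]

/-- KEY: `Σ (1 ⊗ c₁) * Δ(S c₂) = S c ⊗ 1`. -/
lemma conv_i2_cS : conv (ι₂ (H := H)) cS = ι₁ ∘ₗ antipode (R := ℂ) := by
  calc conv (ι₂ (H := H)) cS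
      = conv (conv cUnit ι₂) cS := by rw [cUnit_conv]
    _ = conv (conv (conv (ι₁ ∘ₗ antipode (R := ℂ)) ι₁) ι₂) cS := by rw [conv_iS_i1]
    _ = conv (conv (ι₁ ∘ₗ antipode (R := ℂ)) (conv ι₁ ι₂)) cS := congrArg (fun t => conv t cS) (conv_assoc _ _ _)
    _ = conv (conv (ι₁ ∘ₗ antipode (R := ℂ)) Coalgebra.comul) cS := by rw [conv_i1_i2]
    _ = conv (ι₁ ∘ₗ antipode (R := ℂ)) (conv Coalgebra.comul cS) := by rw [conv_assoc]
    _ = conv (ι₁ ∘ₗ antipode (R := ℂ)) cUnit := by rw [conv_comul_cS]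
    _ = ι₁ ∘ₗ antipode (R := ℂ) := conv_cUnit _

lemma key_sum {c : H} {ι : Type*} (r : Coalgebra.Repr ℂ c ι) :
    ∑ i ∈ r.index, ((1 : H) ⊗ₜ[ℂ] r.left i) * (Coalgebra.comul (R := ℂ) (antipode (R := ℂ) (r.right i)))
      = (antipode (R := ℂ) c) ⊗ₜ[ℂ] (1 : H) := by
  have h := LinearMap.congr_fun (conv_i2_cS (H := H)) c
  rw [conv_repr _ _ r] at h
  simpa using h

lemma fourier_of_integral (φ : H →ₗ[ℂ] ℂ) (hφ : IsRightIntegral φ) :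
    IsFourierForm (intForm φ) := by
  intro c d
  set F : H ⊗[ℂ] H →ₗ[ℂ] H :=
    (TensorProduct.lid ℂ H).toLinearMap ∘ₗ LinearMap.rTensor H φ
      ∘ₗ LinearMap.mulRight ℂ (Coalgebra.comul (R := ℂ) d) with hF
  have hFA : F ((antipode (R := ℂ) c) ⊗ₜ[ℂ] (1 : H)) =
      TensorProduct.lid ℂ H ((LinearMap.rTensor H ((intForm φ) c))
        (Coalgebra.comul (R := ℂ) d)) := by
    have hmap : (TensorProduct.lid ℂ H).toLinearMap ∘ₗ LinearMap.rTensor H φ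
        ∘ₗ LinearMap.mulLeft ℂ ((antipode (R := ℂ) c) ⊗ₜ[ℂ] (1 : H)) =
        (TensorProduct.lid ℂ H).toLinearMap ∘ₗ LinearMap.rTensor H ((intForm φ) c) :=
      TensorProduct.ext' fun p q => by
        simp [intForm, Algebra.TensorProduct.tmul_mul_tmul]
    have h2 := LinearMap.congr_fun hmap (Coalgebra.comul (R := ℂ) d)
    simpa [hF] using h2
  have hFB : ∀ (a : H) (w : H ⊗[ℂ] H), F (((1 : H) ⊗ₜ[ℂ] a) * w) = a * F w := by
    intro a w
    have hmap : F ∘ₗ LinearMap.mulLeft ℂ (((1 : H) ⊗ₜ[ℂ] a)) = LinearMap.mulLeft ℂ a ∘ₗ F :=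
      TensorProduct.ext' fun p q => by
        have inner : ∀ t : H ⊗[ℂ] H,
            (TensorProduct.lid ℂ H) (LinearMap.rTensor H φ ((p ⊗ₜ[ℂ] (a * q)) * t)) =
            a * (TensorProduct.lid ℂ H) (LinearMap.rTensor H φ ((p ⊗ₜ[ℂ] q) * t)) := by
          intro t
          induction t using TensorProduct.induction_on with
          | zero => simp
          | tmul u v => simp [Algebra.TensorProduct.tmul_mul_tmul, mul_smul_comm, mul_assoc]
          | add t₁ t₂ h₁ h₂ => simp [mul_add, h₁, h₂]
        simpa [hF, Algebra.TensorProduct.tmul_mul_tmul] using inner (Coalgebra.comul (R := ℂ) d)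
    simpa using LinearMap.congr_fun hmap w
  have hFC : ∀ b : H, F (Coalgebra.comul (R := ℂ) (antipode (R := ℂ) b)) =
      φ (antipode (R := ℂ) b * d) • 1 := by
    intro b
    have h1 : F (Coalgebra.comul (R := ℂ) (antipode (R := ℂ) b)) =
        TensorProduct.lid ℂ H (LinearMap.rTensor H φ
          (Coalgebra.comul (R := ℂ) (antipode (R := ℂ) b) * Coalgebra.comul (R := ℂ) d)) := by
      simp [hF]
    rw [h1, ← Bialgebra.comul_mul]
    exact hφ _
  have r : Coalgebra.Repr ℂ c (H × H) := Coalgebra.Repr.arbitrary ℂ c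
  have expand : F ((antipode (R := ℂ) c) ⊗ₜ[ℂ] (1 : H)) =
      ∑ i ∈ r.index, φ (antipode (R := ℂ) (r.right i) * d) • r.left i := by
    rw [← key_sum r, map_sum]
    refine Finset.sum_congr rfl fun i _ => ?_
    rw [hFB, hFC, mul_smul_comm, mul_one]
  have rhs : TensorProduct.rid ℂ H ((LinearMap.lTensor H ((intForm φ).flip d))
        (Coalgebra.comul (R := ℂ) c)) =
      ∑ i ∈ r.index, φ (antipode (R := ℂ) (r.right i) * d) • r.left i := by
    rw [← r.eq, map_sum, map_sum]
    refine Finset.sum_congr rfl fun i _ => ?_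
    simp [intForm]
  rw [← hFA, expand, rhs]

lemma integral_of_fourier (ω : H →ₗ[ℂ] H →ₗ[ℂ] ℂ) (hω : IsFourierForm ω) :
    IsRightIntegral (ω 1) := by
  intro x
  have h := hω 1 x
  simpa [Bialgebra.comul_one, Algebra.TensorProduct.one_def] using h

/-- if `φ` is a right integral then `ω(x,y) = φ(S(x)y)` is a Fourier form;
conversely if `ω` is a Fourier form then `x ↦ ω(1, x)` is a right integral. -/
theorem integral_fourierForm_correspondence :
    (∀ φ : H →ₗ[ℂ] ℂ, IsRightIntegral φ → IsFourierForm (intForm φ)) ∧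
    (∀ ω : H →ₗ[ℂ] H →ₗ[ℂ] ℂ, IsFourierForm ω → IsRightIntegral (ω 1)) :=
  ⟨fourier_of_integral, integral_of_fourier⟩
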